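/- Let W₀, W₁, W₂ be complex Hilbert spaces with real structures and let L₀₁ ⊆ W₀ ⊕ (−W₁), L₁₂ ⊆ W₁ ⊕ (−W₂) be Lagrangians. If the map σ(v₀,v₁,v₁',v₂) = v₁ − v₁' has closed range when restricted to L₀₁ ⊕ L₁₂, then the composition L₀₂ = L₀₁ ∘ L₁₂ (composition of linear relations) is a Lagrangian in W₀ ⊕ (−W₂). -/

import Mathlib

noncomputable section

/-- A real structure on a complex inner product space: an anti-unitary involution `v ↦ v̄`. -/
structure RealStructure (W : Type*) [NormedAddCommGroup W] [InnerProductSpace ℂ W] where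
  conj : W → W
  map_add : ∀ v w : W, conj (v + w) = conj v + conj w
  map_smul : ∀ (c : ℂ) (v : W), conj (c • v) = (starRingEnd ℂ) c • conj v
  invol : ∀ v : W, conj (conj v) = v
  inner_conj : ∀ v w : W, (inner ℂ (conj v) (conj w) : ℂ) = (starRingEnd ℂ) (inner ℂ v w : ℂ)

/-- The real structure of `A ⊕ (−B)`. -/
def pairConj {A B : Type*} [NormedAddCommGroup A] [InnerProductSpace ℂ A]
    [NormedAddCommGroup B] [InnerProductSpace ℂ B]
    (rA : RealStructure A) (rB : RealStructure B) : A × B → A × B :=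
  fun p => (rA.conj p.1, -rB.conj p.2)

/-- The Hermitian inner product of `A ⊕ B`. -/
def pairInner {A B : Type*} [NormedAddCommGroup A] [InnerProductSpace ℂ A]
    [NormedAddCommGroup B] [InnerProductSpace ℂ B] (x y : A × B) : ℂ :=
  (inner ℂ x.1 y.1 : ℂ) + (inner ℂ x.2 y.2 : ℂ)

/-- A Lagrangian `L ⊆ A ⊕ (−B)`. -/
def IsLagrangianPair {A B : Type*} [NormedAddCommGroup A] [InnerProductSpace ℂ A]
    [NormedAddCommGroup B] [InnerProductSpace ℂ B]
    (rA : RealStructure A) (rB : RealStructure B) (L : Submodule ℂ (A × B)) : Prop :=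
  pairConj rA rB '' (L : Set (A × B)) = {y : A × B | ∀ x ∈ L, pairInner x y = 0}

/-- The composition of two linear relations `L₀₁ ⊆ W₀ × W₁`, `L₁₂ ⊆ W₁ × W₂`. -/
def composeRel {W₀ W₁ W₂ : Type*} [NormedAddCommGroup W₀] [InnerProductSpace ℂ W₀]
    [NormedAddCommGroup W₁] [InnerProductSpace ℂ W₁]
    [NormedAddCommGroup W₂] [InnerProductSpace ℂ W₂]
    (L01 : Submodule ℂ (W₀ × W₁)) (L12 : Submodule ℂ (W₁ × W₂)) :
    Submodule ℂ (W₀ × W₂) where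
  carrier := {p | ∃ w₁ : W₁, (p.1, w₁) ∈ L01 ∧ (w₁, p.2) ∈ L12}
  add_mem' := by
    rintro a b ⟨w, hw1, hw2⟩ ⟨w', hw1', hw2'⟩
    exact ⟨w + w', L01.add_mem hw1 hw1', L12.add_mem hw2 hw2'⟩
  zero_mem' := ⟨0, L01.zero_mem, L12.zero_mem⟩
  smul_mem' := by
    rintro c a ⟨w, hw1, hw2⟩
    exact ⟨c • w, L01.smul_mem c hw1, L12.smul_mem c hw2⟩

section Aux

variable {A B : Type*} [NormedAddCommGroup A] [InnerProductSpace ℂ A]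
  [NormedAddCommGroup B] [InnerProductSpace ℂ B]

lemma RealStructure.conj_zero (r : RealStructure A) : r.conj 0 = 0 := by
  have := r.map_smul 0 0
  simpa using this

lemma RealStructure.conj_neg (r : RealStructure A) (v : A) : r.conj (-v) = -r.conj v := by
  have := r.map_smul (-1) v
  simpa using this

lemma RealStructure.conj_sub (r : RealStructure A) (v w : A) :
    r.conj (v - w) = r.conj v - r.conj w := by
  rw [sub_eq_add_neg, r.map_add, r.conj_neg, ← sub_eq_add_neg]

lemma RealStructure.norm_conj (r : RealStructure A) (v : A) : ‖r.conj v‖ = ‖v‖ := by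
  have h := r.inner_conj v v
  rw [inner_self_eq_norm_sq_to_K, inner_self_eq_norm_sq_to_K] at h
  have h2 : ((‖r.conj v‖ : ℂ)) ^ 2 = ((‖v‖ : ℂ)) ^ 2 := by
    simpa [← Complex.ofReal_pow, Complex.conj_ofReal] using h
  have h3 : ‖r.conj v‖ ^ 2 = ‖v‖ ^ 2 := by exact_mod_cast h2
  have h4 := congrArg Real.sqrt h3
  rwa [Real.sqrt_sq (norm_nonneg _), Real.sqrt_sq (norm_nonneg _)] at h4

lemma RealStructure.continuous_conj (r : RealStructure A) : Continuous r.conj := by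
  refine (LipschitzWith.of_dist_le_mul (K := 1) fun a b => ?_).continuous
  rw [dist_eq_norm, dist_eq_norm, ← r.conj_sub, r.norm_conj]
  simp

lemma pairConj_invol (rA : RealStructure A) (rB : RealStructure B) (p : A × B) :
    pairConj rA rB (pairConj rA rB p) = p := by
  simp [pairConj, rA.invol, rB.conj_neg, rB.invol]

lemma pairConj_continuous (rA : RealStructure A) (rB : RealStructure B) :
    Continuous (pairConj rA rB) :=
  (rA.continuous_conj.comp continuous_fst).prodMk
    ((rB.continuous_conj.comp continuous_snd).neg)

lemma lag_fwd {rA : RealStructure A} {rB : RealStructure B} {L : Submodule ℂ (A × B)}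
    (h : IsLagrangianPair rA rB L) {x y : A × B} (hx : x ∈ L) (hy : y ∈ L) :
    pairInner x (pairConj rA rB y) = 0 := by
  have hmem : pairConj rA rB y ∈ pairConj rA rB '' (L : Set (A × B)) := ⟨y, hy, rfl⟩
  rw [h] at hmem
  exact hmem x hx

lemma lag_bwd {rA : RealStructure A} {rB : RealStructure B} {L : Submodule ℂ (A × B)}
    (h : IsLagrangianPair rA rB L) {p : A × B} (hp : ∀ x ∈ L, pairInner x p = 0) :
    pairConj rA rB p ∈ L := by
  have hmem : p ∈ pairConj rA rB '' (L : Set (A × B)) := by rw [h]; exact hp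
  obtain ⟨q, hq, rfl⟩ := hmem
  rw [pairConj_invol]
  exact hq

lemma lag_closed {rA : RealStructure A} {rB : RealStructure B} {L : Submodule ℂ (A × B)}
    (h : IsLagrangianPair rA rB L) : IsClosed (L : Set (A × B)) := by
  have hAnn : IsClosed {y : A × B | ∀ x ∈ L, pairInner x y = 0} := by
    have hEq : {y : A × B | ∀ x ∈ L, pairInner x y = 0} =
        ⋂ x ∈ (L : Set (A × B)), {y : A × B | pairInner x y = 0} := by
      ext y; simp [Set.mem_iInter]
    rw [hEq]
    refine isClosed_biInter fun x _ => ?_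
    have hc : Continuous fun y : A × B => pairInner x y :=
      (Continuous.inner continuous_const continuous_fst).add
        (Continuous.inner continuous_const continuous_snd)
    exact isClosed_eq hc continuous_const
  have hset : (L : Set (A × B)) =
      pairConj rA rB ⁻¹' {y : A × B | ∀ x ∈ L, pairInner x y = 0} := by
    ext p
    constructor
    · intro hp
      rw [Set.mem_preimage, ← h]
      exact Set.mem_image_of_mem _ hp
    · intro hp
      rw [Set.mem_preimage, ← h] at hp
      obtain ⟨q, hq, hq2⟩ := hp
      have hpq : p = q := by
        have := congrArg (pairConj rA rB) hq2
        rw [pairConj_invol, pairConj_invol] at this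
        exact this.symm
      exact hpq ▸ hq
  rw [hset]
  exact hAnn.preimage (pairConj_continuous rA rB)

end Aux

variable {W₀ W₁ W₂ : Type*}
  [NormedAddCommGroup W₀] [InnerProductSpace ℂ W₀] [CompleteSpace W₀]
  [NormedAddCommGroup W₁] [InnerProductSpace ℂ W₁] [CompleteSpace W₁]
  [NormedAddCommGroup W₂] [InnerProductSpace ℂ W₂] [CompleteSpace W₂]

/-- If `σ(v₀,v₁,v₁',v₂) = v₁ − v₁'` has closed range when restricted to
`L = L₀₁ ⊕ L₁₂`, then the composition `L₀₂ = L₀₁ ∘ L₁₂` is a Lagrangian in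
`W₀ ⊕ (−W₂)`. -/
theorem composition_lagrangian_of_closed_range
    (r₀ : RealStructure W₀) (r₁ : RealStructure W₁) (r₂ : RealStructure W₂)
    (L01 : Submodule ℂ (W₀ × W₁)) (L12 : Submodule ℂ (W₁ × W₂))
    (h01 : IsLagrangianPair r₀ r₁ L01) (h12 : IsLagrangianPair r₁ r₂ L12)
    (hclosed : IsClosed {w : W₁ | ∃ x ∈ L01, ∃ y ∈ L12, w = x.2 - y.1}) :
    IsLagrangianPair r₀ r₂ (composeRel L01 L12) := by
  classical
  set L02 := composeRel L01 L12 with hL02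
  have mem02 : ∀ p : W₀ × W₂, p ∈ L02 ↔ ∃ w₁ : W₁, (p.1, w₁) ∈ L01 ∧ (w₁, p.2) ∈ L12 :=
    fun p => Iff.rfl
  show pairConj r₀ r₂ '' (L02 : Set (W₀ × W₂)) = {y : W₀ × W₂ | ∀ x ∈ L02, pairInner x y = 0}
  apply Set.Subset.antisymm
  · -- easy direction: conj of L02 annihilates L02
    rintro p ⟨y, hy, rfl⟩ x hx
    obtain ⟨v, hv1, hv2⟩ := (mem02 y).1 hy
    obtain ⟨w, hw1, hw2⟩ := (mem02 x).1 hx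
    have h1 := lag_fwd h01 hw1 hv1
    have h2 := lag_fwd h12 hw2 hv2
    simp only [pairInner, pairConj, inner_neg_right] at h1 h2 ⊢
    linear_combination h1 + h2
  · -- hard direction
    intro z hz
    simp only [Set.mem_setOf_eq] at hz
    suffices hCz : pairConj r₀ r₂ z ∈ L02 by
      exact ⟨pairConj r₀ r₂ z, hCz, pairConj_invol r₀ r₂ z⟩
    have hL01c : IsClosed (L01 : Set (W₀ × W₁)) := lag_closed h01
    have hL12c : IsClosed (L12 : Set (W₁ × W₂)) := lag_closed h12
    set K : Submodule ℂ ((W₀ × W₁) × (W₁ × W₂)) := L01.prod L12 with hK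
    have hKc : IsClosed (K : Set ((W₀ × W₁) × (W₁ × W₂))) := by
      have : (K : Set ((W₀ × W₁) × (W₁ × W₂)))
          = (L01 : Set (W₀ × W₁)) ×ˢ (L12 : Set (W₁ × W₂)) := rfl
      rw [this]
      exact hL01c.prod hL12c
    haveI : CompleteSpace K := hKc.completeSpace_coe
    -- the map σ
    set T : ((W₀ × W₁) × (W₁ × W₂)) →L[ℂ] W₁ :=
      ((ContinuousLinearMap.snd ℂ W₀ W₁).comp (ContinuousLinearMap.fst ℂ (W₀ × W₁) (W₁ × W₂))) -
      ((ContinuousLinearMap.fst ℂ W₁ W₂).comp (ContinuousLinearMap.snd ℂ (W₀ × W₁) (W₁ × W₂)))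
      with hT
    have hTapp : ∀ p : (W₀ × W₁) × (W₁ × W₂), T p = p.1.2 - p.2.1 := fun p => rfl
    set R : Submodule ℂ W₁ := K.map (T : ((W₀ × W₁) × (W₁ × W₂)) →ₗ[ℂ] W₁) with hR
    have hRset : (R : Set W₁) = {w : W₁ | ∃ x ∈ L01, ∃ y ∈ L12, w = x.2 - y.1} := by
      ext w
      constructor
      · rintro ⟨p, hp, rfl⟩
        exact ⟨p.1, hp.1, p.2, hp.2, rfl⟩
      · rintro ⟨x, hx, y, hy, rfl⟩
        exact ⟨(x, y), ⟨hx, hy⟩, rfl⟩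
    have hRc : IsClosed (R : Set W₁) := by rw [hRset]; exact hclosed
    haveI : CompleteSpace R := hRc.completeSpace_coe
    -- f : K → R
    set f : K →L[ℂ] R :=
      ContinuousLinearMap.codRestrict (T.comp K.subtypeL) R
        (fun k => Submodule.mem_map_of_mem k.2) with hf
    have hfapp : ∀ k : K, (f k : W₁) = (k : (W₀ × W₁) × (W₁ × W₂)).1.2 -
        (k : (W₀ × W₁) × (W₁ × W₂)).2.1 := fun k => rfl
    have hfsurj : Function.Surjective f := by
      rintro ⟨w, hw⟩
      obtain ⟨p, hp, rfl⟩ := hw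
      exact ⟨⟨p, hp⟩, rfl⟩
    -- the functional ψ on K
    set ψ : K →ₗ[ℂ] ℂ :=
      { toFun := fun k => (inner ℂ z.1 (k : (W₀ × W₁) × (W₁ × W₂)).1.1 : ℂ)
          + (inner ℂ z.2 (k : (W₀ × W₁) × (W₁ × W₂)).2.2 : ℂ)
        map_add' := by
          intro a b
          simp only [Submodule.coe_add, Prod.fst_add, Prod.snd_add, inner_add_right]
          ring
        map_smul' := by
          intro c a
          simp only [Submodule.coe_smul, Prod.smul_fst, Prod.smul_snd, inner_smul_right,
            RingHom.id_apply, smul_eq_mul]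
          ring } with hψ
    have hψapp : ∀ k : K, ψ k = (inner ℂ z.1 (k : (W₀ × W₁) × (W₁ × W₂)).1.1 : ℂ)
        + (inner ℂ z.2 (k : (W₀ × W₁) × (W₁ × W₂)).2.2 : ℂ) := fun k => rfl
    -- kernel condition
    have hker : LinearMap.ker (f : K →ₗ[ℂ] R) ≤ LinearMap.ker ψ := by
      intro k hk
      have hk0 : (f k : W₁) = 0 := by
        simpa using congrArg Subtype.val (LinearMap.mem_ker.1 hk)
      rw [hfapp] at hk0
      have heq : (k : (W₀ × W₁) × (W₁ × W₂)).1.2 = (k : (W₀ × W₁) × (W₁ × W₂)).2.1 :=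
        sub_eq_zero.1 hk0
      have hmem : ((k : (W₀ × W₁) × (W₁ × W₂)).1.1, (k : (W₀ × W₁) × (W₁ × W₂)).2.2) ∈ L02 := by
        refine (mem02 _).2 ⟨(k : (W₀ × W₁) × (W₁ × W₂)).1.2, ?_, ?_⟩
        · exact k.2.1
        · rw [heq]; exact k.2.2
      have h0 := hz _ hmem
      simp only [pairInner] at h0
      rw [LinearMap.mem_ker, hψapp]
      have := congrArg (starRingEnd ℂ) h0
      simpa [inner_conj_symm] using this
    -- the descended functional on R
    have hfsurj' : Function.Surjective (f : K →ₗ[ℂ] R) := hfsurj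
    set e := (f : K →ₗ[ℂ] R).quotKerEquivOfSurjective hfsurj' with he
    set φ₀ : R →ₗ[ℂ] ℂ :=
      ((LinearMap.ker (f : K →ₗ[ℂ] R)).liftQ ψ hker).comp e.symm.toLinearMap with hφ₀
    have hφ₀f : ∀ k : K, φ₀ (f k) = ψ k := by
      intro k
      have h1 : e (Submodule.Quotient.mk k) = f k := by
        simp [he, LinearMap.quotKerEquivOfSurjective]
      have h2 : e.symm (f k) = Submodule.Quotient.mk k := by
        rw [← h1, LinearEquiv.symm_apply_apply]
      simp [hφ₀, h2]
    -- boundedness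
    obtain ⟨C, hCpos, hCle⟩ := f.exists_preimage_norm_le hfsurj
    have hψbound : ∀ k : K, ‖ψ k‖ ≤ (‖z.1‖ + ‖z.2‖) * ‖k‖ := by
      intro k
      rw [hψapp]
      have e1 : ‖(inner ℂ z.1 (k : (W₀ × W₁) × (W₁ × W₂)).1.1 : ℂ)‖ ≤ ‖z.1‖ * ‖k‖ := by
        refine (norm_inner_le_norm _ _).trans ?_
        refine mul_le_mul_of_nonneg_left ?_ (norm_nonneg _)
        exact (norm_fst_le _).trans (norm_fst_le _)
      have e2 : ‖(inner ℂ z.2 (k : (W₀ × W₁) × (W₁ × W₂)).2.2 : ℂ)‖ ≤ ‖z.2‖ * ‖k‖ := by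
        refine (norm_inner_le_norm _ _).trans ?_
        refine mul_le_mul_of_nonneg_left ?_ (norm_nonneg _)
        exact (norm_snd_le _).trans (norm_snd_le _)
      calc ‖(inner ℂ z.1 (k : (W₀ × W₁) × (W₁ × W₂)).1.1 : ℂ)
            + (inner ℂ z.2 (k : (W₀ × W₁) × (W₁ × W₂)).2.2 : ℂ)‖
          ≤ ‖(inner ℂ z.1 (k : (W₀ × W₁) × (W₁ × W₂)).1.1 : ℂ)‖
            + ‖(inner ℂ z.2 (k : (W₀ × W₁) × (W₁ × W₂)).2.2 : ℂ)‖ := norm_add_le _ _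
        _ ≤ ‖z.1‖ * ‖k‖ + ‖z.2‖ * ‖k‖ := add_le_add e1 e2
        _ = (‖z.1‖ + ‖z.2‖) * ‖k‖ := by ring
    have hφ₀bound : ∀ w : R, ‖φ₀ w‖ ≤ ((‖z.1‖ + ‖z.2‖) * C) * ‖w‖ := by
      intro w
      obtain ⟨k, hk1, hk2⟩ := hCle w
      have hcal : ‖φ₀ w‖ = ‖ψ k‖ := by rw [← hk1, hφ₀f k]
      rw [hcal]
      calc ‖ψ k‖ ≤ (‖z.1‖ + ‖z.2‖) * ‖k‖ := hψbound k
        _ ≤ (‖z.1‖ + ‖z.2‖) * (C * ‖w‖) := by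
            have hM : (0:ℝ) ≤ ‖z.1‖ + ‖z.2‖ := by positivity
            exact mul_le_mul_of_nonneg_left hk2 hM
        _ = ((‖z.1‖ + ‖z.2‖) * C) * ‖w‖ := by ring
    set φ : R →L[ℂ] ℂ := φ₀.mkContinuous _ hφ₀bound with hφ
    -- Riesz representation
    set u : R := (InnerProductSpace.toDual ℂ R).symm φ with hu
    have hukey : ∀ k : K, (inner ℂ ((u : W₁)) ((k : (W₀ × W₁) × (W₁ × W₂)).1.2 -
        (k : (W₀ × W₁) × (W₁ × W₂)).2.1) : ℂ) = ψ k := by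
      intro k
      have h1 : (inner ℂ u (f k) : ℂ) = φ (f k) := InnerProductSpace.toDual_symm_apply
      have h2 : (inner ℂ u (f k) : ℂ) = (inner ℂ (u : W₁) ((f k : W₁)) : ℂ) :=
        Submodule.coe_inner R u (f k)
      rw [← hfapp k, ← h2, h1, hφ, LinearMap.mkContinuous_apply]
      exact hφ₀f k
    have key01 : ∀ x ∈ L01, (inner ℂ (u : W₁) x.2 : ℂ) = (inner ℂ z.1 x.1 : ℂ) := by
      intro x hx
      have hk : ((x, (0 : W₁ × W₂)) : (W₀ × W₁) × (W₁ × W₂)) ∈ K := ⟨hx, L12.zero_mem⟩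
      have h := hukey ⟨(x, 0), hk⟩
      rw [hψapp] at h
      simpa using h
    have key12 : ∀ y ∈ L12, (inner ℂ (u : W₁) y.1 : ℂ) = -(inner ℂ z.2 y.2 : ℂ) := by
      intro y hy
      have hk : (((0 : W₀ × W₁), y) : (W₀ × W₁) × (W₁ × W₂)) ∈ K := ⟨L01.zero_mem, hy⟩
      have h := hukey ⟨(0, y), hk⟩
      rw [hψapp] at h
      simp only [Prod.fst_zero, Prod.snd_zero, zero_sub, inner_neg_right, inner_zero_right, zero_add] at h
      linear_combination -h
    refine (mem02 _).2 ⟨r₁.conj (u : W₁), ?_, ?_⟩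
    · have hp : ∀ x ∈ L01, pairInner x (z.1, -(u : W₁)) = 0 := by
        intro x hx
        have h := key01 x hx
        have h' := congrArg (starRingEnd ℂ) h
        rw [inner_conj_symm, inner_conj_symm] at h'
        simp only [pairInner, inner_neg_right]
        linear_combination -h'
      have hmem := lag_bwd h01 hp
      have hcc : pairConj r₀ r₁ (z.1, -(u : W₁)) = (r₀.conj z.1, r₁.conj (u : W₁)) := by
        simp [pairConj, r₁.conj_neg]
      rw [hcc] at hmem
      exact hmem
    · have hp : ∀ y ∈ L12, pairInner y ((u : W₁), z.2) = 0 := by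
        intro y hy
        have h := key12 y hy
        have h' := congrArg (starRingEnd ℂ) h
        simp only [map_neg, inner_conj_symm] at h'
        simp only [pairInner]
        linear_combination h'
      have hmem := lag_bwd h12 hp
      have hcc : pairConj r₁ r₂ ((u : W₁), z.2) = (r₁.conj (u : W₁), -r₂.conj z.2) := rfl
      rw [hcc] at hmem
      exact hmem
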